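/- Let N ≥ 1 be an integer, let δ' ∈ ℝ, let 0 < r₀ and let 0 < r̄ < r₀/2. Given a continuous function ψ on the closed annulus {z ∈ ℝ^N : r̄ ≤ ‖z‖ ≤ r₀}, define E_{r̄}(ψ) on the punctured closed ball {z : 0 < ‖z‖ ≤ r₀} by: E_{r̄}(ψ)(z) = ψ(z) when r̄ ≤ ‖z‖ ≤ r₀; E_{r̄}(ψ)(z) = ((2‖z‖ − r̄)/r̄)·ψ(r̄ z/‖z‖) when r̄/2 ≤ ‖z‖ ≤ r̄; and E_{r̄}(ψ)(z) = 0 when 0 < ‖z‖ ≤ r̄/2. Then E_{r̄}(ψ) is continuous on {z : 0 < ‖z‖ ≤ r₀}, and sup_{0<‖z‖≤r₀} ‖z‖^{−δ'} |E_{r̄}(ψ)(z)| ≤ 2^{|δ'|} · sup_{r̄≤‖z‖≤r₀} ‖z‖^{−δ'} |ψ(z)|; in particular the constant 2^{|δ'|} depends only on δ' and not on r̄. -/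

import Mathlib

/-- The extension operator `E_r̄`: it agrees with `ψ` on the annulus `r̄ ≤ ‖z‖ ≤ r₀`,
equals `((2‖z‖ - r̄)/r̄) ψ(r̄ z/‖z‖)` on `r̄/2 ≤ ‖z‖ ≤ r̄`, and vanishes for `‖z‖ ≤ r̄/2`. -/
noncomputable def extOp (N : ℕ) (rb : ℝ) (ψ : EuclideanSpace ℝ (Fin N) → ℝ)
    (z : EuclideanSpace ℝ (Fin N)) : ℝ :=
  if rb ≤ ‖z‖ then ψ z
  else if rb / 2 ≤ ‖z‖ then (2 * ‖z‖ - rb) / rb * ψ ((rb / ‖z‖) • z)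
  else 0

/-- `t ^ (-δ') ≤ 2 ^ |δ'|` for `1/2 ≤ t ≤ 1`. -/
lemma aux_rpow_bound (δ' t : ℝ) (h1 : 1/2 ≤ t) (h2 : t ≤ 1) :
    t ^ (-δ') ≤ (2 : ℝ) ^ |δ'| := by
  have ht : (0:ℝ) < t := by linarith
  rcases le_or_gt δ' 0 with h | h
  · have : t ^ (-δ') ≤ (1:ℝ) ^ (-δ') :=
      Real.rpow_le_rpow ht.le h2 (by linarith)
    rw [Real.one_rpow] at this
    refine this.trans ?_
    calc (1:ℝ) = 2 ^ (0:ℝ) := by rw [Real.rpow_zero]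
    _ ≤ 2 ^ |δ'| := Real.rpow_le_rpow_of_exponent_le one_le_two (abs_nonneg _)
  · have h12 : ((1:ℝ)/2) ^ (-δ') ≤ 2 ^ |δ'| := by
      rw [abs_of_pos h]
      rw [one_div, Real.inv_rpow (by norm_num), Real.rpow_neg (by norm_num), inv_inv]
    refine le_trans ?_ h12
    exact Real.rpow_le_rpow_of_nonpos (by norm_num) h1 (by linarith)

/-- The extension operator `E_r̄` maps functions continuous on the
annulus `{r̄ ≤ ‖z‖ ≤ r₀}` to functions continuous on the punctured ball `{0 < ‖z‖ ≤ r₀}`,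
and its norm between the weighted `C⁰` spaces with weight `δ'` is bounded by `2^|δ'|`,
a constant depending only on `δ'` and not on `r̄ ∈ (0, r₀/2)`. -/
theorem statement11 (N : ℕ) (hN : 1 ≤ N) (δ' r₀ rb : ℝ)
    (hr₀ : 0 < r₀) (hrb : 0 < rb) (hrbr₀ : rb < r₀ / 2)
    (ψ : EuclideanSpace ℝ (Fin N) → ℝ)
    (hψ : ContinuousOn ψ {z : EuclideanSpace ℝ (Fin N) | rb ≤ ‖z‖ ∧ ‖z‖ ≤ r₀}) :
    ContinuousOn (extOp N rb ψ) {z : EuclideanSpace ℝ (Fin N) | 0 < ‖z‖ ∧ ‖z‖ ≤ r₀} ∧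
    ∀ z : EuclideanSpace ℝ (Fin N), 0 < ‖z‖ → ‖z‖ ≤ r₀ →
      ‖z‖ ^ (-δ') * |extOp N rb ψ z| ≤
        (2 : ℝ) ^ |δ'| *
          sSup ((fun w : EuclideanSpace ℝ (Fin N) => ‖w‖ ^ (-δ') * |ψ w|) ''
            {w : EuclideanSpace ℝ (Fin N) | rb ≤ ‖w‖ ∧ ‖w‖ ≤ r₀}) := by
  set A : Set (EuclideanSpace ℝ (Fin N)) := {z | rb ≤ ‖z‖ ∧ ‖z‖ ≤ r₀} with hA
  set P : Set (EuclideanSpace ℝ (Fin N)) := {z | 0 < ‖z‖ ∧ ‖z‖ ≤ r₀} with hP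
  -- the projection map
  set proj : EuclideanSpace ℝ (Fin N) → EuclideanSpace ℝ (Fin N) :=
    fun z => ((max rb ‖z‖) / ‖z‖) • z with hprojdef
  have hprojnorm : ∀ z : EuclideanSpace ℝ (Fin N), 0 < ‖z‖ → ‖proj z‖ = max rb ‖z‖ := by
    intro z hz
    rw [hprojdef]
    simp only [norm_smul, Real.norm_eq_abs]
    rw [abs_of_nonneg (div_nonneg (le_max_of_le_left hrb.le) hz.le),
      div_mul_cancel₀ _ (ne_of_gt hz)]
  have hmaps : ∀ z ∈ P, proj z ∈ A := by
    intro z hz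
    have h := hprojnorm z hz.1
    constructor
    · rw [h]; exact le_max_left _ _
    · rw [h]; exact max_le (by linarith) hz.2
  -- the cutoff function
  set χ : EuclideanSpace ℝ (Fin N) → ℝ :=
    fun z => min 1 (max 0 ((2 * ‖z‖ - rb) / rb)) with hχdef
  have hχcont : Continuous χ := by
    apply Continuous.min continuous_const
    apply Continuous.max continuous_const
    exact ((continuous_const.mul continuous_norm).sub continuous_const).div_const rb
  have hEq : ∀ z ∈ P, extOp N rb ψ z = χ z * ψ (proj z) := by
    intro z hz
    unfold extOp
    rcases le_or_gt rb ‖z‖ with h | h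
    · rw [if_pos h]
      have h1 : proj z = z := by
        rw [hprojdef]
        simp only
        rw [max_eq_right h, div_self (ne_of_gt hz.1), one_smul]
      have h2 : (1:ℝ) ≤ (2 * ‖z‖ - rb) / rb := by
        rw [le_div_iff₀ hrb]; linarith
      rw [h1, hχdef]
      simp only
      rw [max_eq_right (le_trans zero_le_one h2), min_eq_left h2, one_mul]
    · have h1 : proj z = (rb / ‖z‖) • z := by
        rw [hprojdef]; simp only; rw [max_eq_left h.le]
      rw [if_neg (not_le.mpr h), h1, hχdef]
      simp only
      rcases le_or_gt (rb/2) ‖z‖ with h2 | h2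
      · rw [if_pos h2]
        have h3 : (2 * ‖z‖ - rb) / rb ≤ 1 := by rw [div_le_one hrb]; linarith
        have h4 : (0:ℝ) ≤ (2 * ‖z‖ - rb) / rb := div_nonneg (by linarith) hrb.le
        rw [max_eq_right h4, min_eq_right h3]
      · rw [if_neg (not_le.mpr h2)]
        have h3 : (2 * ‖z‖ - rb) / rb ≤ 0 :=
          div_nonpos_of_nonpos_of_nonneg (by linarith) hrb.le
        rw [max_eq_left h3, min_eq_right zero_le_one, zero_mul]
  -- continuity
  have hprojcont : ContinuousOn proj P := by
    refine ContinuousOn.smul (f := fun z => max rb ‖z‖ / ‖z‖) (g := id) ?_ ?_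
    · apply ContinuousOn.div
      · exact (continuous_const.max continuous_norm).continuousOn
      · exact continuous_norm.continuousOn
      · intro z hz; exact ne_of_gt hz.1
    · exact continuous_id.continuousOn
  have hcont : ContinuousOn (extOp N rb ψ) P := by
    apply ContinuousOn.congr _ hEq
    exact (hχcont.continuousOn).mul (hψ.comp hprojcont hmaps)
  refine ⟨hcont, ?_⟩
  -- the sup
  set f : EuclideanSpace ℝ (Fin N) → ℝ := fun w => ‖w‖ ^ (-δ') * |ψ w| with hf
  have hAcompact : IsCompact A := by
    have hclosed : IsClosed A := by
      have : A = (fun z : EuclideanSpace ℝ (Fin N) => ‖z‖) ⁻¹' Set.Icc rb r₀ := rfl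
      rw [this]
      exact IsClosed.preimage continuous_norm isClosed_Icc
    exact (isCompact_closedBall (0 : EuclideanSpace ℝ (Fin N)) r₀).of_isClosed_subset
      hclosed (fun z hz => by simpa [Metric.mem_closedBall, dist_zero_right] using hz.2)
  have hfcont : ContinuousOn f A := by
    apply ContinuousOn.mul
    · exact ContinuousOn.rpow_const continuous_norm.continuousOn
        (fun x hx => Or.inl (ne_of_gt (lt_of_lt_of_le hrb hx.1)))
    · exact hψ.abs
  have hbdd : BddAbove (f '' A) := hAcompact.bddAbove_image hfcont
  -- membership of a point in A
  have e0 : EuclideanSpace ℝ (Fin N) := EuclideanSpace.single ⟨0, hN⟩ (rb : ℝ)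
  set e : EuclideanSpace ℝ (Fin N) := EuclideanSpace.single ⟨0, hN⟩ (rb : ℝ) with he
  have hen : ‖e‖ = rb := by
    rw [he, EuclideanSpace.norm_single, Real.norm_eq_abs, abs_of_pos hrb]
  have heA : e ∈ A := ⟨le_of_eq hen.symm, by rw [hen]; linarith⟩
  set S : ℝ := sSup (f '' A) with hS
  have hle : ∀ w ∈ A, f w ≤ S := fun w hw => le_csSup hbdd ⟨w, hw, rfl⟩
  have hSnonneg : 0 ≤ S := by
    refine le_trans ?_ (hle e heA)
    rw [hf]
    positivity
  have h2pow : (1:ℝ) ≤ (2:ℝ) ^ |δ'| := by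
    calc (1:ℝ) = 2 ^ (0:ℝ) := by rw [Real.rpow_zero]
    _ ≤ 2 ^ |δ'| := Real.rpow_le_rpow_of_exponent_le one_le_two (abs_nonneg _)
  have h2pos : (0:ℝ) ≤ (2:ℝ) ^ |δ'| := le_trans zero_le_one h2pow
  intro z hz1 hz2
  unfold extOp
  rcases le_or_gt rb ‖z‖ with h | h
  · rw [if_pos h]
    calc ‖z‖ ^ (-δ') * |ψ z| ≤ S := hle z ⟨h, hz2⟩
    _ = 1 * S := (one_mul S).symm
    _ ≤ (2:ℝ) ^ |δ'| * S := mul_le_mul_of_nonneg_right h2pow hSnonneg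
  · rw [if_neg (not_le.mpr h)]
    rcases le_or_gt (rb/2) ‖z‖ with h2 | h2
    · rw [if_pos h2]
      set w : EuclideanSpace ℝ (Fin N) := (rb / ‖z‖) • z with hw
      have hwn : ‖w‖ = rb := by
        rw [hw, norm_smul, Real.norm_eq_abs,
          abs_of_nonneg (div_nonneg hrb.le (norm_nonneg z)),
          div_mul_cancel₀ _ (ne_of_gt hz1)]
      have hwA : w ∈ A := ⟨le_of_eq hwn.symm, by rw [hwn]; linarith⟩
      have hcoef : |(2 * ‖z‖ - rb) / rb| ≤ 1 := by
        rw [abs_of_nonneg (div_nonneg (by linarith) hrb.le), div_le_one hrb]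
        linarith
      have step1 : ‖z‖ ^ (-δ') * |(2 * ‖z‖ - rb) / rb * ψ w| ≤ ‖z‖ ^ (-δ') * |ψ w| := by
        rw [abs_mul]
        apply mul_le_mul_of_nonneg_left _ (Real.rpow_nonneg (norm_nonneg z) _)
        calc |(2 * ‖z‖ - rb) / rb| * |ψ w| ≤ 1 * |ψ w| :=
          mul_le_mul_of_nonneg_right hcoef (abs_nonneg _)
        _ = |ψ w| := one_mul _
      refine step1.trans ?_
      have hsplit : ‖z‖ ^ (-δ') = (‖z‖ / rb) ^ (-δ') * rb ^ (-δ') := by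
        rw [Real.div_rpow (norm_nonneg z) hrb.le, div_mul_cancel₀]
        exact ne_of_gt (Real.rpow_pos_of_pos hrb _)
      have hratio : (‖z‖ / rb) ^ (-δ') ≤ (2:ℝ) ^ |δ'| := by
        apply aux_rpow_bound
        · rw [le_div_iff₀ hrb]; linarith
        · rw [div_le_one hrb]; linarith
      calc ‖z‖ ^ (-δ') * |ψ w| = (‖z‖ / rb) ^ (-δ') * (rb ^ (-δ') * |ψ w|) := by
            rw [hsplit, mul_assoc]
      _ ≤ (2:ℝ) ^ |δ'| * (rb ^ (-δ') * |ψ w|) := by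
            apply mul_le_mul_of_nonneg_right hratio
            positivity
      _ ≤ (2:ℝ) ^ |δ'| * S := by
            apply mul_le_mul_of_nonneg_left _ h2pos
            have h5 : f w = rb ^ (-δ') * |ψ w| := by simp only [hf]; rw [hwn]
            rw [← h5]; exact hle w hwA
    · rw [if_neg (not_le.mpr h2), abs_zero, mul_zero]
      positivity
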